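/- arXiv:2301.12880 — 3 statements merged into one kernel-verified Lean document; each statement's English description precedes it below -/
import Mathlib

section
/- For measurable partitions X = X₁ ∪̇ X₂ and Y = Y₁ ∪̇ Y₂ and K the transfer operator of a coupling π = k·(μ⊗ν), the conditions K 1_{X_i} = 1_{Y_i} (ν-a.e.) for i=1,2 imply π(X₁×Y₂) = π(X₂×Y₁) = 0 and μ(X_i) = ν(Y_i) for i = 1,2. -/
open MeasureTheory

/-- If the transfer operator of a coupling `π = k·(μ⊗ν)` maps the indicators of a
partition `X = X₁ ∪̇ X₂` to those of `Y = Y₁ ∪̇ Y₂`, then `π` puts no mass on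
`X₁ × Y₂` and `X₂ × Y₁`, and the partitions have matching masses. -/
theorem coherent_partition_mass_preservation {d : ℕ}
    (X Y : Set (EuclideanSpace ℝ (Fin d))) (hX : IsCompact X) (hY : IsCompact Y)
    (μ : Measure X) (ν : Measure Y) [IsProbabilityMeasure μ] [IsProbabilityMeasure ν]
    (k : X → Y → ℝ) (hk : Measurable (Function.uncurry k))
    (hk0 : ∀ x y, 0 ≤ k x y) (C : ℝ) (hkb : ∀ x y, k x y ≤ C)
    (π : Measure (X × Y))
    (hπ : π = (μ.prod ν).withDensity fun p => ENNReal.ofReal (k p.1 p.2))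
    (hmarg1 : π.map Prod.fst = μ) (hmarg2 : π.map Prod.snd = ν)
    (X₁ : Set X) (Y₁ : Set Y) (hX₁ : MeasurableSet X₁) (hY₁ : MeasurableSet Y₁)
    (hcoh1 : ∀ᵐ y ∂ν, ∫ x in X₁, k x y ∂μ = Set.indicator Y₁ (fun _ => (1 : ℝ)) y)
    (hcoh2 : ∀ᵐ y ∂ν, ∫ x in X₁ᶜ, k x y ∂μ = Set.indicator Y₁ᶜ (fun _ => (1 : ℝ)) y) :
    π (X₁ ×ˢ Y₁ᶜ) = 0 ∧ π (X₁ᶜ ×ˢ Y₁) = 0 ∧ μ X₁ = ν Y₁ ∧ μ X₁ᶜ = ν Y₁ᶜ := by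
  have hkm : Measurable fun p : X × Y => ENNReal.ofReal (k p.1 p.2) :=
    ENNReal.measurable_ofReal.comp hk
  have hint : ∀ (y : Y) (A : Set X), Integrable (fun x => k x y) (μ.restrict A) := by
    intro y A
    refine Integrable.mono' (integrable_const C)
      (hk.of_uncurry_right).aestronglyMeasurable (ae_of_all _ fun x => ?_)
    rw [Real.norm_eq_abs, abs_of_nonneg (hk0 x y)]
    exact hkb x y
  -- key formula
  have key : ∀ (A : Set X) (B : Set Y), MeasurableSet A → MeasurableSet B →
      π (A ×ˢ B) = ∫⁻ y in B, ENNReal.ofReal (∫ x in A, k x y ∂μ) ∂ν := by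
    intro A B hA hB
    rw [hπ, withDensity_apply _ (hA.prod hB), ← Measure.prod_restrict,
      lintegral_prod_symm _ hkm.aemeasurable]
    refine lintegral_congr fun y => ?_
    rw [← ofReal_integral_eq_lintegral_ofReal (hint y A) (ae_of_all _ fun x => hk0 x y)]
  have h1 : π (X₁ ×ˢ Y₁ᶜ) = 0 := by
    rw [key X₁ Y₁ᶜ hX₁ hY₁.compl]
    have hz : ∀ᵐ y ∂ν.restrict Y₁ᶜ,
        ENNReal.ofReal (∫ x in X₁, k x y ∂μ) = 0 := by
      filter_upwards [ae_restrict_of_ae hcoh1,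
        ae_restrict_mem hY₁.compl] with y hy hyc
      rw [hy, Set.indicator_of_notMem hyc, ENNReal.ofReal_zero]
    rw [lintegral_congr_ae hz, lintegral_zero]
  have h2 : π (X₁ᶜ ×ˢ Y₁) = 0 := by
    rw [key X₁ᶜ Y₁ hX₁.compl hY₁]
    have hz : ∀ᵐ y ∂ν.restrict Y₁,
        ENNReal.ofReal (∫ x in X₁ᶜ, k x y ∂μ) = 0 := by
      filter_upwards [ae_restrict_of_ae hcoh2,
        ae_restrict_mem hY₁] with y hy hyc
      rw [hy, Set.indicator_of_notMem (by simpa using hyc), ENNReal.ofReal_zero]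
    rw [lintegral_congr_ae hz, lintegral_zero]
  have h3 : μ X₁ = ν Y₁ := by
    rw [← hmarg1, Measure.map_apply measurable_fst hX₁, ← Set.prod_univ,
      key X₁ Set.univ hX₁ MeasurableSet.univ, Measure.restrict_univ,
      lintegral_congr_ae (hcoh1.mono fun y hy => by rw [hy])]
    have : ∀ y : Y, ENNReal.ofReal (Set.indicator Y₁ (fun _ => (1:ℝ)) y)
        = Set.indicator Y₁ (fun _ => (1:ENNReal)) y := by
      intro y
      by_cases hy : y ∈ Y₁ <;> simp [hy]
    simp_rw [this]
    rw [lintegral_indicator hY₁]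
    simp
  have h4 : μ X₁ᶜ = ν Y₁ᶜ := by
    rw [prob_compl_eq_one_sub hX₁, prob_compl_eq_one_sub hY₁, h3]
  exact ⟨h1, h2, h3, h4⟩
end

section
/- Conversely, if GW(𝕏,𝕐) = 0 for compact metric measure spaces 𝕏 = (X,d_X,μ) and 𝕐 = (Y,d_Y,ν) with μ, ν fully supported, then there exists a surjective isometry I : X → Y with I_#μ = ν. -/
open MeasureTheory

/-- The Gromov--Wasserstein quadratic cost of a plan `π`. -/
noncomputable def GWcost {X Y : Type*} [MetricSpace X] [MetricSpace Y]
    [MeasurableSpace X] [MeasurableSpace Y] (π : Measure (X × Y)) : ℝ :=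
  ∫ p, ∫ q, (dist p.1 q.1 - dist p.2 q.2) ^ 2 ∂π ∂π

section GWAux

open Metric Set Filter
open scoped ENNReal

lemma gw_aux_lower_bound {X Y : Type*}
    [MetricSpace X] [CompactSpace X] [MeasurableSpace X] [BorelSpace X]
    [MetricSpace Y] [CompactSpace Y] [MeasurableSpace Y] [BorelSpace Y]
    (π : Measure (X × Y)) [IsProbabilityMeasure π] {B B' : Set (X × Y)}
    (hB : MeasurableSet B) (hB' : MeasurableSet B') {c : ℝ} (hc : 0 ≤ c)
    (hlow : ∀ p ∈ B, ∀ q ∈ B', c ≤ (dist p.1 q.1 - dist p.2 q.2) ^ 2) :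
    c * (π B').toReal * (π B).toReal ≤ GWcost π := by
  set F : (X × Y) × (X × Y) → ℝ := fun r => (dist r.1.1 r.2.1 - dist r.1.2 r.2.2) ^ 2 with hF
  have hFc : Continuous F := by
    apply Continuous.pow
    exact ((continuous_fst.fst.dist continuous_snd.fst).sub
      (continuous_fst.snd.dist continuous_snd.snd))
  set C : ℝ := (Metric.diam (Set.univ : Set X) + Metric.diam (Set.univ : Set Y)) ^ 2 with hC
  have hbd : ∀ r, F r ≤ C := by
    intro r
    have h1 : dist r.1.1 r.2.1 ≤ Metric.diam (Set.univ : Set X) :=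
      Metric.dist_le_diam_of_mem isCompact_univ.isBounded (mem_univ _) (mem_univ _)
    have h2 : dist r.1.2 r.2.2 ≤ Metric.diam (Set.univ : Set Y) :=
      Metric.dist_le_diam_of_mem isCompact_univ.isBounded (mem_univ _) (mem_univ _)
    have h3 : (0:ℝ) ≤ dist r.1.1 r.2.1 := dist_nonneg
    have h4 : (0:ℝ) ≤ dist r.1.2 r.2.2 := dist_nonneg
    exact sq_le_sq' (by linarith) (by linarith)
  have hFnn : ∀ r, 0 ≤ F r := fun r => sq_nonneg _
  have hint : ∀ p : X × Y, Integrable (fun q => F (p, q)) π := by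
    intro p
    refine (integrable_const C).mono'
      ((hFc.comp (Continuous.prodMk_right p)).aestronglyMeasurable) ?_
    exact Filter.Eventually.of_forall fun q => by
      rw [Real.norm_eq_abs, abs_of_nonneg (hFnn _)]; exact hbd _
  set g : X × Y → ℝ := fun p => ∫ q, F (p, q) ∂π with hg
  have hgnn : ∀ p, 0 ≤ g p := fun p => integral_nonneg fun q => hFnn _
  have hg_meas : AEStronglyMeasurable g π :=
    (hFc.stronglyMeasurable.integral_prod_right').aestronglyMeasurable
  have hg_bd : ∀ p, ‖g p‖ ≤ C := by
    intro p
    have := norm_integral_le_of_norm_le_const (μ := π) (f := fun q => F (p, q)) (C := C)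
      (Filter.Eventually.of_forall fun q => by
        rw [Real.norm_eq_abs, abs_of_nonneg (hFnn _)]; exact hbd _)
    simpa [measure_univ] using this
  have hg_int : Integrable g π :=
    (integrable_const C).mono' hg_meas (Filter.Eventually.of_forall hg_bd)
  have step1 : ∀ p ∈ B, c * (π B').toReal ≤ g p := by
    intro p hp
    have hmono : ∫ q, B'.indicator (fun _ => c) q ∂π ≤ g p := by
      refine integral_mono ((integrable_const c).indicator hB') (hint p) fun q => ?_
      by_cases hq : q ∈ B'
      · simpa [Set.indicator_of_mem hq] using hlow p hp q hq
      · simpa [Set.indicator_of_notMem hq] using hFnn (p, q)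
    rwa [integral_indicator_const c hB', smul_eq_mul, mul_comm] at hmono
  have step2 : ∫ p, B.indicator (fun _ => c * (π B').toReal) p ∂π ≤ ∫ p, g p ∂π := by
    refine integral_mono ((integrable_const _).indicator hB) hg_int fun p => ?_
    by_cases hp : p ∈ B
    · simpa [Set.indicator_of_mem hp] using step1 p hp
    · simpa [Set.indicator_of_notMem hp] using hgnn p
  rw [integral_indicator_const _ hB, smul_eq_mul] at step2
  calc c * (π B').toReal * (π B).toReal
      = (π B).toReal * (c * (π B').toReal) := by ring
    _ ≤ ∫ p, g p ∂π := step2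
    _ = ∫ p, ∫ q, (dist p.1 q.1 - dist p.2 q.2) ^ 2 ∂π ∂π := rfl

lemma gw_aux_limsup_add_zero {ι : Type*} {F : Filter ι} {f g : ι → ℝ≥0∞}
    (hf : Filter.limsup f F = 0) (hg : Filter.limsup g F = 0) :
    Filter.limsup (fun n => f n + g n) F = 0 := by
  refine le_antisymm ?_ zero_le
  refine ENNReal.le_of_forall_pos_le_add fun ε hε _ => ?_
  have hf' : ∀ᶠ n in F, f n < ε / 2 :=
    eventually_lt_of_limsup_lt (by rw [hf]; exact ENNReal.half_pos (by simpa using hε.ne'))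
  have hg' : ∀ᶠ n in F, g n < ε / 2 :=
    eventually_lt_of_limsup_lt (by rw [hg]; exact ENNReal.half_pos (by simpa using hε.ne'))
  refine limsup_le_of_le (by isBoundedDefault) ?_
  filter_upwards [hf', hg'] with n h1 h2
  calc f n + g n ≤ ε / 2 + ε / 2 := add_le_add h1.le h2.le
    _ = (0:ℝ≥0∞) + ε := by rw [ENNReal.add_halves, zero_add]

lemma gw_aux_limsup_biUnion {ι β M : Type*} [MeasurableSpace M] {F : Filter ι} [F.NeBot]
    {π : ι → Measure M} (t : Finset β) (A : β → Set M)
    (h : ∀ b ∈ t, Filter.limsup (fun n => π n (A b)) F = 0) :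
    Filter.limsup (fun n => π n (⋃ b ∈ t, A b)) F = 0 := by
  classical
  induction t using Finset.induction_on with
  | empty => simp [Filter.limsup_const]
  | @insert a s ha ih =>
    have h1 := h a (Finset.mem_insert_self a s)
    have h2 := ih fun b hb => h b (Finset.mem_insert_of_mem hb)
    refine le_antisymm ?_ zero_le
    calc Filter.limsup (fun n => π n (⋃ b ∈ insert a s, A b)) F
        ≤ Filter.limsup (fun n => π n (A a) + π n (⋃ b ∈ s, A b)) F := by
          refine limsup_le_limsup (Filter.Eventually.of_forall fun n => ?_)
          rw [Finset.set_biUnion_insert]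
          exact measure_union_le _ _
      _ = 0 := gw_aux_limsup_add_zero h1 h2

end GWAux

open Metric Set Filter
open scoped ENNReal

/-- If the Gromov--Wasserstein cost between two compact metric measure spaces with
fully supported measures is `0`, then there is a surjective measure-preserving
isometry between them. -/
theorem isometry_of_gw_zero {X Y : Type*}
    [MetricSpace X] [CompactSpace X] [MeasurableSpace X] [BorelSpace X]
    [MetricSpace Y] [CompactSpace Y] [MeasurableSpace Y] [BorelSpace Y]
    (μ : Measure X) (ν : Measure Y) [IsProbabilityMeasure μ] [IsProbabilityMeasure ν]
    (hμfull : ∀ s : Set X, IsOpen s → s.Nonempty → 0 < μ s)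
    (hνfull : ∀ s : Set Y, IsOpen s → s.Nonempty → 0 < ν s)
    (hGW : ∀ δ : ℝ, 0 < δ → ∃ π : Measure (X × Y), IsProbabilityMeasure π ∧
      π.map Prod.fst = μ ∧ π.map Prod.snd = ν ∧ GWcost π < δ) :
    ∃ I : X → Y, Isometry I ∧ Function.Surjective I ∧ μ.map I = ν := by
  classical
  -- nonemptiness
  have hXne : Nonempty X := by
    by_contra h
    have h0 : μ Set.univ = 1 := measure_univ
    rw [Set.univ_eq_empty_iff.mpr (not_nonempty_iff.mp h), measure_empty] at h0
    exact zero_ne_one h0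
  have hYne : Nonempty Y := by
    by_contra h
    have h0 : ν Set.univ = 1 := measure_univ
    rw [Set.univ_eq_empty_iff.mpr (not_nonempty_iff.mp h), measure_empty] at h0
    exact zero_ne_one h0
  -- choose the plans
  choose π hπprob hπfst hπsnd hπcost using fun n : ℕ => hGW (1 / (n + 1)) (by positivity)
  -- an ultrafilter extending atTop
  set 𝒰 : Ultrafilter ℕ := Ultrafilter.of Filter.atTop with h𝒰def
  have h𝒰 : (𝒰 : Filter ℕ) ≤ Filter.atTop := Ultrafilter.of_le _
  -- the finitely additive "limit"
  set m : Set (X × Y) → ℝ≥0∞ := fun A => Filter.limsup (fun n => π n A) (𝒰 : Filter ℕ) with hm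
  have hm_le_one : ∀ A, m A ≤ 1 := by
    intro A
    refine limsup_le_of_le (by isBoundedDefault) (Filter.Eventually.of_forall fun n => ?_)
    haveI := hπprob n
    exact prob_le_one
  have hm_mono : ∀ {A B : Set (X × Y)}, A ⊆ B → m A ≤ m B := fun {A B} h =>
    limsup_le_limsup (Filter.Eventually.of_forall fun n => measure_mono h)
  -- marginals
  have hmargX : ∀ n (s : Set X), MeasurableSet s → π n (Prod.fst ⁻¹' s) = μ s := by
    intro n s hs
    rw [← hπfst n, Measure.map_apply measurable_fst hs]
  have hmargY : ∀ n (s : Set Y), MeasurableSet s → π n (Prod.snd ⁻¹' s) = ν s := by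
    intro n s hs
    rw [← hπsnd n, Measure.map_apply measurable_snd hs]
  have hm_fstm : ∀ s : Set X, MeasurableSet s → m (Prod.fst ⁻¹' s) = μ s := by
    intro s hs
    calc m (Prod.fst ⁻¹' s)
        = Filter.limsup (fun _ => μ s) (𝒰 : Filter ℕ) :=
          Filter.limsup_congr (Filter.Eventually.of_forall fun n => hmargX n s hs)
      _ = μ s := Filter.limsup_const _
  have hm_sndm : ∀ s : Set Y, MeasurableSet s → m (Prod.snd ⁻¹' s) = ν s := by
    intro s hs
    calc m (Prod.snd ⁻¹' s)
        = Filter.limsup (fun _ => ν s) (𝒰 : Filter ℕ) :=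
          Filter.limsup_congr (Filter.Eventually.of_forall fun n => hmargY n s hs)
      _ = ν s := Filter.limsup_const _
  -- the support set
  set S : Set (X × Y) := {p | ∀ ε > 0, 0 < m (Metric.ball p ε)} with hSdef
  have hnotS : ∀ p, p ∉ S → ∃ ε > 0, m (Metric.ball p ε) = 0 := by
    intro p hp
    rw [hSdef, Set.mem_setOf_eq] at hp
    push_neg at hp
    obtain ⟨ε, hε, h0⟩ := hp
    exact ⟨ε, hε, le_antisymm h0 zero_le⟩
  -- distances agree on S
  have hSdist : ∀ p ∈ S, ∀ q ∈ S, dist p.1 q.1 = dist p.2 q.2 := by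
    intro p hp q hq
    by_contra hne
    set d : ℝ := dist p.1 q.1 - dist p.2 q.2 with hd
    have hd0 : d ≠ 0 := sub_ne_zero.mpr hne
    have hdabs : 0 < |d| := abs_pos.mpr hd0
    set r : ℝ := |d| / 8 with hr
    have hrpos : 0 < r := by positivity
    set c : ℝ := d ^ 2 / 4 with hc
    have hcpos : 0 < c := by positivity
    -- lower bound on the integrand on ball p r × ball q r
    have hlow : ∀ p' ∈ Metric.ball p r, ∀ q' ∈ Metric.ball q r,
        c ≤ (dist p'.1 q'.1 - dist p'.2 q'.2) ^ 2 := by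
      intro p' hp' q' hq'
      have hd1 : dist p'.1 p.1 < r := lt_of_le_of_lt (by rw [Prod.dist_eq]; exact le_max_left _ _)
        (Metric.mem_ball.mp hp')
      have hd2 : dist p'.2 p.2 < r := lt_of_le_of_lt (by rw [Prod.dist_eq]; exact le_max_right _ _)
        (Metric.mem_ball.mp hp')
      have hd3 : dist q'.1 q.1 < r := lt_of_le_of_lt (by rw [Prod.dist_eq]; exact le_max_left _ _)
        (Metric.mem_ball.mp hq')
      have hd4 : dist q'.2 q.2 < r := lt_of_le_of_lt (by rw [Prod.dist_eq]; exact le_max_right _ _)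
        (Metric.mem_ball.mp hq')
      have e1 : |dist p'.1 q'.1 - dist p.1 q.1| ≤ dist p'.1 p.1 + dist q'.1 q.1 := by
        have := dist_dist_dist_le p'.1 q'.1 p.1 q.1
        rwa [Real.dist_eq] at this
      have e2 : |dist p'.2 q'.2 - dist p.2 q.2| ≤ dist p'.2 p.2 + dist q'.2 q.2 := by
        have := dist_dist_dist_le p'.2 q'.2 p.2 q.2
        rwa [Real.dist_eq] at this
      have key : |d| / 2 ≤ |dist p'.1 q'.1 - dist p'.2 q'.2| := by
        have e3 : |dist p'.1 q'.1 - dist p'.2 q'.2 - d| ≤ 4 * r := by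
          have : dist p'.1 q'.1 - dist p'.2 q'.2 - d =
              (dist p'.1 q'.1 - dist p.1 q.1) - (dist p'.2 q'.2 - dist p.2 q.2) := by
            rw [hd]; ring
          rw [this]
          calc |(dist p'.1 q'.1 - dist p.1 q.1) - (dist p'.2 q'.2 - dist p.2 q.2)|
              ≤ |dist p'.1 q'.1 - dist p.1 q.1| + |dist p'.2 q'.2 - dist p.2 q.2| :=
                abs_sub _ _
            _ ≤ 4 * r := by linarith
        have e4 : |d| - |dist p'.1 q'.1 - dist p'.2 q'.2| ≤ 4 * r := by
          have h5 := abs_sub_abs_le_abs_sub d (dist p'.1 q'.1 - dist p'.2 q'.2)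
          have h6 : |d - (dist p'.1 q'.1 - dist p'.2 q'.2)|
              = |dist p'.1 q'.1 - dist p'.2 q'.2 - d| := abs_sub_comm _ _
          linarith
        have : 4 * r = |d| / 2 := by rw [hr]; ring
        linarith
      calc c = (|d| / 2) ^ 2 := by rw [hc, div_pow, sq_abs]; norm_num
        _ ≤ |dist p'.1 q'.1 - dist p'.2 q'.2| ^ 2 := by
            apply pow_le_pow_left₀ (by positivity) key
        _ = (dist p'.1 q'.1 - dist p'.2 q'.2) ^ 2 := sq_abs _
    -- extract positivity of the limits
    set a : ℝ≥0∞ := m (Metric.ball p r) with ha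
    set b : ℝ≥0∞ := m (Metric.ball q r) with hb
    have ha0 : a ≠ 0 := (hp r hrpos).ne'
    have hb0 : b ≠ 0 := (hq r hrpos).ne'
    have haT : a ≠ ∞ := ((hm_le_one _).trans_lt ENNReal.one_lt_top).ne
    have hbT : b ≠ ∞ := ((hm_le_one _).trans_lt ENNReal.one_lt_top).ne
    have haev : ∀ᶠ n in (𝒰 : Filter ℕ), a / 2 < π n (Metric.ball p r) :=
      (Ultrafilter.frequently_iff_eventually).mp
        (Filter.frequently_lt_of_lt_limsup (by isBoundedDefault)
          (ENNReal.half_lt_self ha0 haT))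
    have hbev : ∀ᶠ n in (𝒰 : Filter ℕ), b / 2 < π n (Metric.ball q r) :=
      (Ultrafilter.frequently_iff_eventually).mp
        (Filter.frequently_lt_of_lt_limsup (by isBoundedDefault)
          (ENNReal.half_lt_self hb0 hbT))
    set E : ℝ := c * (b / 2).toReal * (a / 2).toReal with hE
    have hEpos : 0 < E := by
      have h1 : 0 < (a / 2).toReal :=
        ENNReal.toReal_pos (by simp [ENNReal.div_eq_zero_iff, ha0]) (by
          simp [ENNReal.div_eq_top, haT])
      have h2 : 0 < (b / 2).toReal :=
        ENNReal.toReal_pos (by simp [ENNReal.div_eq_zero_iff, hb0]) (by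
          simp [ENNReal.div_eq_top, hbT])
      positivity
    have hcostev : ∀ᶠ n in (𝒰 : Filter ℕ), GWcost (π n) < E := by
      have h1 : ∀ᶠ n : ℕ in Filter.atTop, (1 : ℝ) / (n + 1) < E :=
        tendsto_one_div_add_atTop_nhds_zero_nat.eventually_lt_const hEpos
      exact ((h1.filter_mono h𝒰).mono fun n h => (hπcost n).trans h)
    obtain ⟨n, h1, h2, h3⟩ := (haev.and (hbev.and hcostev)).exists
    haveI := hπprob n
    have hlb := gw_aux_lower_bound (π n) measurableSet_ball measurableSet_ball hcpos.le hlow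
    have hfin1 : π n (Metric.ball q r) ≠ ∞ := (measure_lt_top _ _).ne
    have hfin2 : π n (Metric.ball p r) ≠ ∞ := (measure_lt_top _ _).ne
    have ht1 : (b / 2).toReal ≤ (π n (Metric.ball q r)).toReal :=
      ENNReal.toReal_mono hfin1 h2.le
    have ht2 : (a / 2).toReal ≤ (π n (Metric.ball p r)).toReal :=
      ENNReal.toReal_mono hfin2 h1.le
    have : E ≤ GWcost (π n) := by
      refine le_trans ?_ hlb
      rw [hE]
      exact mul_le_mul (mul_le_mul le_rfl ht1 ENNReal.toReal_nonneg hcpos.le) ht2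
        ENNReal.toReal_nonneg (by positivity)
    exact absurd h3 (not_lt.mpr this)
  -- every x has a partner
  have hproj1 : ∀ x : X, ∃ y : Y, (x, y) ∈ S := by
    intro x
    by_contra h
    push_neg at h
    choose r hr hnull using fun y : Y => hnotS (x, y) (h y)
    obtain ⟨t, ht⟩ := isCompact_univ.elim_finite_subcover (fun y : Y => Metric.ball y (r y))
      (fun y => Metric.isOpen_ball) (fun y _ => Set.mem_iUnion.mpr
        ⟨y, Metric.mem_ball_self (hr y)⟩)
    have htne : t.Nonempty := by
      obtain ⟨y0⟩ := hYne
      obtain ⟨y, hy⟩ := Set.mem_iUnion₂.mp (ht (Set.mem_univ y0))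
      exact ⟨y, hy.1⟩
    set ρ : ℝ := t.inf' htne r with hρ
    have hρpos : 0 < ρ := (Finset.lt_inf'_iff htne).mpr fun y _ => hr y
    have hsub : Metric.ball x ρ ×ˢ (Set.univ : Set Y) ⊆
        ⋃ y ∈ t, Metric.ball ((x, y) : X × Y) (r y) := by
      rintro ⟨x', y'⟩ ⟨hx', -⟩
      obtain ⟨y, hyt, hy'⟩ := Set.mem_iUnion₂.mp (ht (Set.mem_univ y'))
      refine Set.mem_iUnion₂.mpr ⟨y, hyt, ?_⟩
      rw [Metric.mem_ball, Prod.dist_eq]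
      exact max_lt (lt_of_lt_of_le hx' (Finset.inf'_le r hyt)) hy'
    have hnull' : m (Metric.ball x ρ ×ˢ (Set.univ : Set Y)) = 0 := by
      refine le_antisymm ?_ zero_le
      calc m (Metric.ball x ρ ×ˢ (Set.univ : Set Y))
          ≤ m (⋃ y ∈ t, Metric.ball ((x, y) : X × Y) (r y)) := hm_mono hsub
        _ = 0 := gw_aux_limsup_biUnion t _ fun y _ => hnull y
    have heq : Metric.ball x ρ ×ˢ (Set.univ : Set Y) = Prod.fst ⁻¹' Metric.ball x ρ := by
      ext ⟨a, b⟩; simp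
    rw [heq, hm_fstm _ measurableSet_ball] at hnull'
    exact absurd hnull'
      (hμfull _ Metric.isOpen_ball (Metric.nonempty_ball.mpr hρpos)).ne'
  have hproj2 : ∀ y : Y, ∃ x : X, (x, y) ∈ S := by
    intro y
    by_contra h
    push_neg at h
    choose r hr hnull using fun x : X => hnotS (x, y) (h x)
    obtain ⟨t, ht⟩ := isCompact_univ.elim_finite_subcover (fun x : X => Metric.ball x (r x))
      (fun x => Metric.isOpen_ball) (fun x _ => Set.mem_iUnion.mpr
        ⟨x, Metric.mem_ball_self (hr x)⟩)
    have htne : t.Nonempty := by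
      obtain ⟨x0⟩ := hXne
      obtain ⟨x, hx⟩ := Set.mem_iUnion₂.mp (ht (Set.mem_univ x0))
      exact ⟨x, hx.1⟩
    set ρ : ℝ := t.inf' htne r with hρ
    have hρpos : 0 < ρ := (Finset.lt_inf'_iff htne).mpr fun x _ => hr x
    have hsub : (Set.univ : Set X) ×ˢ Metric.ball y ρ ⊆
        ⋃ x ∈ t, Metric.ball ((x, y) : X × Y) (r x) := by
      rintro ⟨x', y'⟩ ⟨-, hy'⟩
      obtain ⟨x, hxt, hx'⟩ := Set.mem_iUnion₂.mp (ht (Set.mem_univ x'))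
      refine Set.mem_iUnion₂.mpr ⟨x, hxt, ?_⟩
      rw [Metric.mem_ball, Prod.dist_eq]
      exact max_lt hx' (lt_of_lt_of_le hy' (Finset.inf'_le r hxt))
    have hnull' : m ((Set.univ : Set X) ×ˢ Metric.ball y ρ) = 0 := by
      refine le_antisymm ?_ zero_le
      calc m ((Set.univ : Set X) ×ˢ Metric.ball y ρ)
          ≤ m (⋃ x ∈ t, Metric.ball ((x, y) : X × Y) (r x)) := hm_mono hsub
        _ = 0 := gw_aux_limsup_biUnion t _ fun x _ => hnull x
    have heq : (Set.univ : Set X) ×ˢ Metric.ball y ρ = Prod.snd ⁻¹' Metric.ball y ρ := by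
      ext ⟨a, b⟩; simp
    rw [heq, hm_sndm _ measurableSet_ball] at hnull'
    exact absurd hnull'
      (hνfull _ Metric.isOpen_ball (Metric.nonempty_ball.mpr hρpos)).ne'
  -- the map
  have huniq : ∀ (x : X) (y y' : Y), (x, y) ∈ S → (x, y') ∈ S → y = y' := by
    intro x y y' h1 h2
    have := hSdist (x, y) h1 (x, y') h2
    simp only [dist_self] at this
    exact dist_eq_zero.mp this.symm
  set I : X → Y := fun x => (hproj1 x).choose with hIdef
  have hI : ∀ x, (x, I x) ∈ S := fun x => (hproj1 x).choose_spec
  have hgraph : ∀ x y, (x, y) ∈ S → I x = y := fun x y h => huniq x (I x) y (hI x) h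
  have hIiso : Isometry I := Isometry.of_dist_eq fun x x' =>
    (hSdist (x, I x) (hI x) (x', I x') (hI x')).symm
  have hIsurj : Function.Surjective I := fun y =>
    ⟨(hproj2 y).choose, hgraph _ _ (hproj2 y).choose_spec⟩
  have hImeas : Measurable I := hIiso.continuous.measurable
  -- measure statement
  refine ⟨I, hIiso, hIsurj, ?_⟩
  haveI : IsProbabilityMeasure (μ.map I) := Measure.isProbabilityMeasure_map hImeas.aemeasurable
  -- mass escapes from neighborhoods of S
  have hKnull : ∀ ε : ℝ, 0 < ε → m ((Metric.thickening ε S)ᶜ) = 0 := by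
    intro ε hε
    set K : Set (X × Y) := (Metric.thickening ε S)ᶜ with hK
    have hKc : IsClosed K := (Metric.isOpen_thickening).isClosed_compl
    have hKcpt : IsCompact K := hKc.isCompact
    have hKS : ∀ p ∈ K, p ∉ S := fun p hp hpS =>
      hp (Metric.self_subset_thickening hε S hpS)
    choose r hr hnull using fun p : K => hnotS (p : X × Y) (hKS p p.2)
    obtain ⟨t, ht⟩ := hKcpt.elim_finite_subcover
      (fun p : K => Metric.ball (p : X × Y) (r p)) (fun p => Metric.isOpen_ball)
      (fun p hp => Set.mem_iUnion.mpr ⟨⟨p, hp⟩, Metric.mem_ball_self (hr ⟨p, hp⟩)⟩)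
    refine le_antisymm ?_ zero_le
    calc m K ≤ m (⋃ p ∈ t, Metric.ball (p : X × Y) (r p)) := hm_mono ht
      _ = 0 := gw_aux_limsup_biUnion t _ fun p _ => hnull p
  have hev_small : ∀ ε : ℝ, 0 < ε → ∀ η : ℝ≥0∞, 0 < η →
      ∀ᶠ n in (𝒰 : Filter ℕ), π n ((Metric.thickening ε S)ᶜ) < η := by
    intro ε hε η hη
    refine Filter.eventually_lt_of_limsup_lt ?_
    rw [show Filter.limsup (fun n => π n ((Metric.thickening ε S)ᶜ)) (𝒰 : Filter ℕ)
      = m ((Metric.thickening ε S)ᶜ) from rfl, hKnull ε hε]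
    exact hη
  -- direction 1 : ν A ≤ μ.map I A for closed A
  have hdir1 : ∀ A : Set Y, IsClosed A → ν A ≤ (μ.map I) A := by
    intro A hA
    have H : ∀ ε : ℝ, 0 < ε → ν A ≤ (μ.map I) (Metric.thickening (2 * ε) A) := by
      intro ε hε
      refine ENNReal.le_of_forall_pos_le_add fun η hη _ => ?_
      obtain ⟨n, hn⟩ := (hev_small ε hε η (by exact_mod_cast hη)).exists
      haveI := hπprob n
      set T : Set Y := Metric.thickening (2 * ε) A with hT
      have hTmeas : MeasurableSet T := Metric.isOpen_thickening.measurableSet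
      have hsub : Prod.snd ⁻¹' A ⊆
          (Prod.fst ⁻¹' (I ⁻¹' T)) ∪ (Metric.thickening ε S)ᶜ := by
        rintro ⟨x, y⟩ hy
        by_cases hth : (x, y) ∈ Metric.thickening ε S
        · left
          obtain ⟨z, hzS, hzd⟩ := Metric.mem_thickening_iff.mp hth
          have hz2 : z.2 = I z.1 := (hgraph z.1 z.2 hzS).symm
          have hd1 : dist x z.1 < ε := lt_of_le_of_lt
            (by rw [Prod.dist_eq]; exact le_max_left _ _) hzd
          have hd2 : dist y z.2 < ε := lt_of_le_of_lt
            (by rw [Prod.dist_eq]; exact le_max_right _ _) hzd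
          have hIx : dist (I x) y < 2 * ε := by
            have h5 : dist (I x) (I z.1) = dist x z.1 := hIiso.dist_eq x z.1
            calc dist (I x) y ≤ dist (I x) (I z.1) + dist (I z.1) y := dist_triangle _ _ _
              _ = dist x z.1 + dist y z.2 := by rw [h5, hz2, dist_comm (I z.1) y]
              _ < 2 * ε := by linarith
          exact Set.mem_preimage.mpr (Metric.mem_thickening_iff.mpr ⟨y, hy, hIx⟩)
        · right; exact hth
      calc ν A = π n (Prod.snd ⁻¹' A) := (hmargY n A hA.measurableSet).symm
        _ ≤ π n ((Prod.fst ⁻¹' (I ⁻¹' T)) ∪ (Metric.thickening ε S)ᶜ) := measure_mono hsub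
        _ ≤ π n (Prod.fst ⁻¹' (I ⁻¹' T)) + π n ((Metric.thickening ε S)ᶜ) :=
            measure_union_le _ _
        _ ≤ μ (I ⁻¹' T) + η := add_le_add
            (le_of_eq (hmargX n _ (hImeas hTmeas))) hn.le
        _ = (μ.map I) T + η := by rw [Measure.map_apply hImeas hTmeas]
    have htends : Filter.Tendsto (fun δ => (μ.map I) (Metric.thickening δ A)) (nhdsWithin 0 (Set.Ioi 0))
        (nhds ((μ.map I) A)) :=
      tendsto_measure_thickening_of_isClosed ⟨1, one_pos, measure_ne_top _ _⟩ hA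
    refine ge_of_tendsto htends ?_
    refine eventually_nhdsWithin_of_forall fun δ hδ => ?_
    have hδ' : (0:ℝ) < δ / 2 := by simpa using (Set.mem_Ioi.mp hδ)
    have := H (δ / 2) (by linarith [Set.mem_Ioi.mp hδ])
    rwa [show 2 * (δ / 2) = δ by ring] at this
  -- direction 2 : μ.map I A ≤ ν A for closed A
  have hdir2 : ∀ A : Set Y, IsClosed A → (μ.map I) A ≤ ν A := by
    intro A hA
    have H : ∀ ε : ℝ, 0 < ε → (μ.map I) A ≤ ν (Metric.thickening (2 * ε) A) := by
      intro ε hε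
      refine ENNReal.le_of_forall_pos_le_add fun η hη _ => ?_
      obtain ⟨n, hn⟩ := (hev_small ε hε η (by exact_mod_cast hη)).exists
      haveI := hπprob n
      set T : Set Y := Metric.thickening (2 * ε) A with hT
      have hTmeas : MeasurableSet T := Metric.isOpen_thickening.measurableSet
      have hsub : Prod.fst ⁻¹' (I ⁻¹' A) ⊆
          (Prod.snd ⁻¹' T) ∪ (Metric.thickening ε S)ᶜ := by
        rintro ⟨x, y⟩ hy
        by_cases hth : (x, y) ∈ Metric.thickening ε S
        · left
          obtain ⟨z, hzS, hzd⟩ := Metric.mem_thickening_iff.mp hth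
          have hz2 : z.2 = I z.1 := (hgraph z.1 z.2 hzS).symm
          have hd1 : dist x z.1 < ε := lt_of_le_of_lt
            (by rw [Prod.dist_eq]; exact le_max_left _ _) hzd
          have hd2 : dist y z.2 < ε := lt_of_le_of_lt
            (by rw [Prod.dist_eq]; exact le_max_right _ _) hzd
          have hIx : dist y (I x) < 2 * ε := by
            have h5 : dist (I z.1) (I x) = dist z.1 x := hIiso.dist_eq z.1 x
            calc dist y (I x) ≤ dist y z.2 + dist z.2 (I x) := dist_triangle _ _ _
              _ = dist y z.2 + dist z.1 x := by rw [hz2, h5]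
              _ < 2 * ε := by
                  have : dist z.1 x < ε := by rw [dist_comm]; exact hd1
                  linarith
          exact Set.mem_preimage.mpr (Metric.mem_thickening_iff.mpr
            ⟨I x, Set.mem_preimage.mp hy, hIx⟩)
        · right; exact hth
      calc (μ.map I) A = μ (I ⁻¹' A) := Measure.map_apply hImeas hA.measurableSet
        _ = π n (Prod.fst ⁻¹' (I ⁻¹' A)) := (hmargX n _ (hImeas hA.measurableSet)).symm
        _ ≤ π n ((Prod.snd ⁻¹' T) ∪ (Metric.thickening ε S)ᶜ) := measure_mono hsub
        _ ≤ π n (Prod.snd ⁻¹' T) + π n ((Metric.thickening ε S)ᶜ) := measure_union_le _ _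
        _ ≤ ν T + η := add_le_add (le_of_eq (hmargY n _ hTmeas)) hn.le
    have htends : Filter.Tendsto (fun δ => ν (Metric.thickening δ A)) (nhdsWithin 0 (Set.Ioi 0))
        (nhds (ν A)) :=
      tendsto_measure_thickening_of_isClosed ⟨1, one_pos, measure_ne_top _ _⟩ hA
    refine ge_of_tendsto htends ?_
    refine eventually_nhdsWithin_of_forall fun δ hδ => ?_
    have := H (δ / 2) (by linarith [Set.mem_Ioi.mp hδ])
    rwa [show 2 * (δ / 2) = δ by ring] at this
  -- conclude by the π-λ theorem
  refine ext_of_generate_finite {s : Set Y | IsClosed s} ?_ ?_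
    (fun s hs => le_antisymm (hdir2 s hs) (hdir1 s hs)) (by simp)
  · rw [BorelSpace.measurable_eq (α := Y), borel_eq_generateFrom_isClosed]
  · exact fun s hs u hu _ => hs.inter hu
end

section
/- The square root of the Gromov–Wasserstein cost satisfies the triangle inequality: for compact metric measure spaces 𝕏, 𝕐, ℤ, GW(𝕏,ℤ)^{1/2} ≤ GW(𝕏,𝕐)^{1/2} + GW(𝕐,ℤ)^{1/2}. -/
open MeasureTheory ProbabilityTheory

/-- The Gromov--Wasserstein value between two metric measure spaces. -/
noncomputable def GWval {X Y : Type*} [MetricSpace X] [MetricSpace Y]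
    [MeasurableSpace X] [MeasurableSpace Y] (μ : Measure X) (ν : Measure Y) : ℝ :=
  sInf (GWcost '' {π : Measure (X × Y) | IsProbabilityMeasure π ∧
    π.map Prod.fst = μ ∧ π.map Prod.snd = ν})

lemma GWcost_nonneg {X Y : Type*} [MetricSpace X] [MetricSpace Y]
    [MeasurableSpace X] [MeasurableSpace Y] (π : Measure (X × Y)) : 0 ≤ GWcost π :=
  integral_nonneg fun _ => integral_nonneg fun _ => sq_nonneg _

/-- Cauchy--Schwarz / Minkowski step. -/
lemma sqrt_integral_add_sq_le {W : Type*} [MeasurableSpace W] (M : Measure W)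
    (F G : W → ℝ) (hF : Integrable (fun w => F w ^ 2) M)
    (hG : Integrable (fun w => G w ^ 2) M) (hFG : Integrable (fun w => F w * G w) M) :
    Real.sqrt (∫ w, (F w + G w) ^ 2 ∂M) ≤
      Real.sqrt (∫ w, F w ^ 2 ∂M) + Real.sqrt (∫ w, G w ^ 2 ∂M) := by
  set A := ∫ w, F w ^ 2 ∂M with hAdef
  set C := ∫ w, G w ^ 2 ∂M with hCdef
  set B := ∫ w, F w * G w ∂M with hBdef
  have hA : 0 ≤ A := integral_nonneg fun w => sq_nonneg _
  have hC : 0 ≤ C := integral_nonneg fun w => sq_nonneg _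
  have hq : ∀ t : ℝ, 0 ≤ C * (t * t) + (2 * B) * t + A := by
    intro t
    have h1 : (fun w => (t * G w + F w) ^ 2)
        = fun w => t ^ 2 * G w ^ 2 + 2 * t * (F w * G w) + F w ^ 2 := by
      funext w; ring
    have hI1 : Integrable (fun w => t ^ 2 * G w ^ 2 + 2 * t * (F w * G w)) M := by
      exact (hG.const_mul _).add (hFG.const_mul _)
    have h2 : C * (t * t) + (2 * B) * t + A = ∫ w, (t * G w + F w) ^ 2 ∂M := by
      rw [h1, integral_add hI1 hF, integral_add (hG.const_mul _) (hFG.const_mul _),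
        integral_const_mul _ _, integral_const_mul _ _, ← hAdef, ← hBdef, ← hCdef]
      ring
    rw [h2]
    exact integral_nonneg fun w => sq_nonneg _
  have hdisc : discrim C (2 * B) A ≤ 0 := discrim_le_zero hq
  rw [discrim] at hdisc
  have hBsq : B ^ 2 ≤ A * C := by nlinarith
  have hB : B ≤ Real.sqrt A * Real.sqrt C := by
    calc B ≤ |B| := le_abs_self B
    _ = Real.sqrt (B ^ 2) := (Real.sqrt_sq_eq_abs B).symm
    _ ≤ Real.sqrt (A * C) := Real.sqrt_le_sqrt hBsq
    _ = Real.sqrt A * Real.sqrt C := Real.sqrt_mul hA _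
  have hexp : ∫ w, (F w + G w) ^ 2 ∂M = A + 2 * B + C := by
    have h1 : (fun w => (F w + G w) ^ 2)
        = fun w => F w ^ 2 + 2 * (F w * G w) + G w ^ 2 := by
      funext w; ring
    have hI2 : Integrable (fun w => F w ^ 2 + 2 * (F w * G w)) M := by
      exact hF.add (hFG.const_mul _)
    rw [h1, integral_add hI2 hG, integral_add hF (hFG.const_mul _),
      integral_const_mul _ _, ← hAdef, ← hBdef, ← hCdef]
  have hle : ∫ w, (F w + G w) ^ 2 ∂M ≤ (Real.sqrt A + Real.sqrt C) ^ 2 := by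
    rw [hexp]
    nlinarith [Real.sq_sqrt hA, Real.sq_sqrt hC]
  calc Real.sqrt (∫ w, (F w + G w) ^ 2 ∂M) ≤ Real.sqrt ((Real.sqrt A + Real.sqrt C) ^ 2) :=
      Real.sqrt_le_sqrt hle
  _ = Real.sqrt A + Real.sqrt C :=
      Real.sqrt_sq (add_nonneg (Real.sqrt_nonneg _) (Real.sqrt_nonneg _))

lemma sqrt_add_le_of_nonneg {a b : ℝ} (ha : 0 ≤ a) (hb : 0 ≤ b) :
    Real.sqrt (a + b) ≤ Real.sqrt a + Real.sqrt b := by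
  have h : a + b ≤ (Real.sqrt a + Real.sqrt b) ^ 2 := by
    nlinarith [Real.sq_sqrt ha, Real.sq_sqrt hb, Real.sqrt_nonneg a, Real.sqrt_nonneg b]
  calc Real.sqrt (a + b) ≤ Real.sqrt ((Real.sqrt a + Real.sqrt b) ^ 2) := Real.sqrt_le_sqrt h
  _ = Real.sqrt a + Real.sqrt b :=
      Real.sqrt_sq (add_nonneg (Real.sqrt_nonneg _) (Real.sqrt_nonneg _))

/-- First marginal (in the pair sense) of a gluing. -/
lemma compProd_prod_map_fst {α β γ : Type*} [MeasurableSpace α] [MeasurableSpace β]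
    [MeasurableSpace γ] (ν : Measure α) [SFinite ν] (κ1 : Kernel α β) (κ2 : Kernel α γ)
    [IsMarkovKernel κ1] [IsMarkovKernel κ2] :
    (ν ⊗ₘ (κ1 ×ₖ κ2)).map (fun p => (p.1, p.2.1)) = ν ⊗ₘ κ1 := by
  have hmeas : Measurable fun p : α × (β × γ) => (p.1, p.2.1) :=
    measurable_fst.prodMk (measurable_snd.fst)
  ext s hs
  rw [Measure.map_apply hmeas hs, Measure.compProd_apply (hmeas hs), Measure.compProd_apply hs]
  refine lintegral_congr fun y => ?_
  have hpre : (Prod.mk y ⁻¹' ((fun p : α × (β × γ) => (p.1, p.2.1)) ⁻¹' s))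
      = Prod.fst ⁻¹' (Prod.mk y ⁻¹' s) := rfl
  rw [hpre, Kernel.prod_apply, ← Set.prod_univ, Measure.prod_prod, measure_univ, mul_one]

/-- Second marginal (in the pair sense) of a gluing. -/
lemma compProd_prod_map_snd {α β γ : Type*} [MeasurableSpace α] [MeasurableSpace β]
    [MeasurableSpace γ] (ν : Measure α) [SFinite ν] (κ1 : Kernel α β) (κ2 : Kernel α γ)
    [IsMarkovKernel κ1] [IsMarkovKernel κ2] :
    (ν ⊗ₘ (κ1 ×ₖ κ2)).map (fun p => (p.1, p.2.2)) = ν ⊗ₘ κ2 := by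
  have hmeas : Measurable fun p : α × (β × γ) => (p.1, p.2.2) :=
    measurable_fst.prodMk (measurable_snd.snd)
  ext s hs
  rw [Measure.map_apply hmeas hs, Measure.compProd_apply (hmeas hs), Measure.compProd_apply hs]
  refine lintegral_congr fun y => ?_
  have hpre : (Prod.mk y ⁻¹' ((fun p : α × (β × γ) => (p.1, p.2.2)) ⁻¹' s))
      = Prod.snd ⁻¹' (Prod.mk y ⁻¹' s) := rfl
  rw [hpre, Kernel.prod_apply, ← Set.univ_prod, Measure.prod_prod, measure_univ, one_mul]

/-- Express the GW cost of a pushforward plan as an integral over the base product measure. -/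
lemma GWcost_map {W S T : Type*} [MeasurableSpace W] [MetricSpace S] [CompactSpace S]
    [MeasurableSpace S] [BorelSpace S] [MetricSpace T] [CompactSpace T] [MeasurableSpace T]
    [BorelSpace T] (m : Measure W) [IsProbabilityMeasure m] {g : W → S × T}
    (hg : Measurable g) :
    GWcost (m.map g) =
      ∫ w : W × W, (dist (g w.1).1 (g w.2).1 - dist (g w.1).2 (g w.2).2) ^ 2 ∂(m.prod m) := by
  set σ := m.map g with hσ
  haveI : IsProbabilityMeasure σ := Measure.isProbabilityMeasure_map hg.aemeasurable
  have hc : Continuous fun z : (S × T) × (S × T) =>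
      (dist z.1.1 z.2.1 - dist z.1.2 z.2.2) ^ 2 := by fun_prop
  have hci : Integrable (fun z : (S × T) × (S × T) =>
      (dist z.1.1 z.2.1 - dist z.1.2 z.2.2) ^ 2) (σ.prod σ) :=
    hc.integrable_of_hasCompactSupport (HasCompactSupport.of_compactSpace _)
  have h1 : GWcost σ = ∫ z : (S × T) × (S × T),
      (dist z.1.1 z.2.1 - dist z.1.2 z.2.2) ^ 2 ∂(σ.prod σ) := by
    rw [GWcost]
    exact integral_integral hci
  rw [h1, hσ, Measure.map_prod_map _ _ hg hg,
    integral_map (hg.prodMap hg).aemeasurable hc.aestronglyMeasurable]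
  rfl

lemma GW_prod_mem {X Y : Type*} [MetricSpace X] [MetricSpace Y]
    [MeasurableSpace X] [MeasurableSpace Y]
    (μ : Measure X) (ν : Measure Y) [SFinite μ] [SFinite ν]
    [IsProbabilityMeasure μ] [IsProbabilityMeasure ν] :
    μ.prod ν ∈ {π : Measure (X × Y) | IsProbabilityMeasure π ∧
      π.map Prod.fst = μ ∧ π.map Prod.snd = ν} :=
  ⟨by infer_instance, Measure.fst_prod, Measure.snd_prod⟩

lemma GWval_nonneg {X Y : Type*} [MetricSpace X] [MetricSpace Y]
    [MeasurableSpace X] [MeasurableSpace Y]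
    (μ : Measure X) (ν : Measure Y) [IsProbabilityMeasure μ] [IsProbabilityMeasure ν] :
    0 ≤ GWval μ ν := by
  refine le_csInf ⟨GWcost (μ.prod ν), Set.mem_image_of_mem _ (GW_prod_mem μ ν)⟩ ?_
  rintro b ⟨π', -, rfl⟩
  exact GWcost_nonneg π'

/-- Triangle inequality for the square root of the Gromov--Wasserstein cost. -/
theorem gw_sqrt_triangle {X Y Z : Type*}
    [MetricSpace X] [CompactSpace X] [MeasurableSpace X] [BorelSpace X]
    [MetricSpace Y] [CompactSpace Y] [MeasurableSpace Y] [BorelSpace Y]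
    [MetricSpace Z] [CompactSpace Z] [MeasurableSpace Z] [BorelSpace Z]
    (μ : Measure X) (ν : Measure Y) (ρ : Measure Z)
    [IsProbabilityMeasure μ] [IsProbabilityMeasure ν] [IsProbabilityMeasure ρ] :
    Real.sqrt (GWval μ ρ) ≤ Real.sqrt (GWval μ ν) + Real.sqrt (GWval ν ρ) := by
  refine le_of_forall_pos_le_add fun η hη => ?_
  set ε : ℝ := (η / 2) ^ 2 with hε
  have hεpos : 0 < ε := by positivity
  have hne1 : (GWcost '' {π : Measure (X × Y) | IsProbabilityMeasure π ∧
      π.map Prod.fst = μ ∧ π.map Prod.snd = ν}).Nonempty :=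
    ⟨GWcost (μ.prod ν), Set.mem_image_of_mem _ (GW_prod_mem μ ν)⟩
  have hne2 : (GWcost '' {π : Measure (Y × Z) | IsProbabilityMeasure π ∧
      π.map Prod.fst = ν ∧ π.map Prod.snd = ρ}).Nonempty :=
    ⟨GWcost (ν.prod ρ), Set.mem_image_of_mem _ (GW_prod_mem ν ρ)⟩
  obtain ⟨c1, ⟨π1, ⟨hπ1p, hπ1f, hπ1s⟩, rfl⟩, hc1⟩ := Real.lt_sInf_add_pos hne1 hεpos
  obtain ⟨c2, ⟨π2, ⟨hπ2p, hπ2f, hπ2s⟩, rfl⟩, hc2⟩ := Real.lt_sInf_add_pos hne2 hεpos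
  haveI := hπ1p; haveI := hπ2p
  -- disintegration over ν
  set ρ1 : Measure (Y × X) := π1.map Prod.swap with hρ1
  haveI : IsProbabilityMeasure ρ1 := Measure.isProbabilityMeasure_map measurable_swap.aemeasurable
  have hρ1fst : ρ1.fst = ν := by
    rw [hρ1, Measure.fst, Measure.map_map measurable_fst measurable_swap]
    exact hπ1s
  have hπ2fst : π2.fst = ν := hπ2f
  haveI : Nonempty X := by
    by_contra h
    rw [not_nonempty_iff] at h
    have h1 : μ Set.univ = 1 := measure_univ
    rw [Set.univ_eq_empty_iff.mpr h, measure_empty] at h1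
    exact zero_ne_one h1
  haveI : Nonempty Z := by
    by_contra h
    rw [not_nonempty_iff] at h
    have h1 : ρ Set.univ = 1 := measure_univ
    rw [Set.univ_eq_empty_iff.mpr h, measure_empty] at h1
    exact zero_ne_one h1
  set κ1 := ρ1.condKernel with hκ1
  set κ2 := π2.condKernel with hκ2
  have hd1 : ν ⊗ₘ κ1 = ρ1 := by rw [hκ1, ← hρ1fst]; exact ρ1.disintegrate _
  have hd2 : ν ⊗ₘ κ2 = π2 := by rw [hκ2, ← hπ2fst]; exact π2.disintegrate _
  -- the glued measure
  set m : Measure (Y × (X × Z)) := ν ⊗ₘ (κ1 ×ₖ κ2) with hm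
  haveI : IsProbabilityMeasure m := by rw [hm]; infer_instance
  have h1 : m.map (fun p => (p.1, p.2.1)) = ρ1 := by
    rw [hm, compProd_prod_map_fst]; exact hd1
  have h2 : m.map (fun p => (p.1, p.2.2)) = π2 := by
    rw [hm, compProd_prod_map_snd]; exact hd2
  set g0 : Y × (X × Z) → X × Z := fun p => (p.2.1, p.2.2) with hg0
  set g1 : Y × (X × Z) → X × Y := fun p => (p.2.1, p.1) with hg1
  set g2 : Y × (X × Z) → Y × Z := fun p => (p.1, p.2.2) with hg2
  have hg0m : Measurable g0 := measurable_snd.fst.prodMk measurable_snd.snd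
  have hg1m : Measurable g1 := measurable_snd.fst.prodMk measurable_fst
  have hg2m : Measurable g2 := measurable_fst.prodMk measurable_snd.snd
  set π : Measure (X × Z) := m.map g0 with hπ
  haveI : IsProbabilityMeasure π := Measure.isProbabilityMeasure_map hg0m.aemeasurable
  have hmg1 : m.map g1 = π1 := by
    have hcomp : g1 = Prod.swap ∘ (fun p : Y × (X × Z) => (p.1, p.2.1)) := rfl
    rw [hcomp, ← Measure.map_map measurable_swap (measurable_fst.prodMk measurable_snd.fst),
      h1, hρ1, Measure.map_map measurable_swap measurable_swap]
    simp
  have hmg2 : m.map g2 = π2 := h2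
  have hπfst : π.map Prod.fst = μ := by
    rw [hπ, Measure.map_map measurable_fst hg0m]
    have hcomp : (Prod.fst ∘ g0) = (Prod.fst ∘ g1) := rfl
    rw [hcomp, ← Measure.map_map measurable_fst hg1m, hmg1]
    exact hπ1f
  have hπsnd : π.map Prod.snd = ρ := by
    rw [hπ, Measure.map_map measurable_snd hg0m]
    have hcomp : (Prod.snd ∘ g0) = (Prod.snd ∘ g2) := rfl
    rw [hcomp, ← Measure.map_map measurable_snd hg2m, hmg2]
    exact hπ2s
  have hXZ : GWval μ ρ ≤ GWcost π := by
    refine csInf_le ⟨0, ?_⟩ (Set.mem_image_of_mem _ ⟨‹_›, hπfst, hπsnd⟩)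
    rintro b ⟨π', -, rfl⟩
    exact GWcost_nonneg π'
  -- cost identities over M := m.prod m
  set M : Measure ((Y × (X × Z)) × (Y × (X × Z))) := m.prod m with hM
  set F : (Y × (X × Z)) × (Y × (X × Z)) → ℝ :=
    fun w => dist w.1.2.1 w.2.2.1 - dist w.1.1 w.2.1 with hFdef
  set G : (Y × (X × Z)) × (Y × (X × Z)) → ℝ :=
    fun w => dist w.1.1 w.2.1 - dist w.1.2.2 w.2.2.2 with hGdef
  have hcost0 : GWcost π = ∫ w, (F w + G w) ^ 2 ∂M := by
    rw [hπ, GWcost_map m hg0m]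
    refine integral_congr_ae (Filter.Eventually.of_forall fun w => ?_)
    simp only [hFdef, hGdef, hg0]
    ring
  have hcost1 : GWcost π1 = ∫ w, F w ^ 2 ∂M := by
    rw [← hmg1, GWcost_map m hg1m]
  have hcost2 : GWcost π2 = ∫ w, G w ^ 2 ∂M := by
    rw [← hmg2, GWcost_map m hg2m]
  have hFc : Continuous F := by rw [hFdef]; fun_prop
  have hGc : Continuous G := by rw [hGdef]; fun_prop
  have hF2 : Integrable (fun w => F w ^ 2) M :=
    ((hFc.pow 2)).integrable_of_hasCompactSupport (HasCompactSupport.of_compactSpace _)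
  have hG2 : Integrable (fun w => G w ^ 2) M :=
    ((hGc.pow 2)).integrable_of_hasCompactSupport (HasCompactSupport.of_compactSpace _)
  have hFG : Integrable (fun w => F w * G w) M :=
    (hFc.mul hGc).integrable_of_hasCompactSupport (HasCompactSupport.of_compactSpace _)
  have hCS := sqrt_integral_add_sq_le M F G hF2 hG2 hFG
  have hv1 : (0:ℝ) ≤ GWval μ ν := GWval_nonneg μ ν
  have hv2 : (0:ℝ) ≤ GWval ν ρ := GWval_nonneg ν ρ
  have hsqε : Real.sqrt ε = η / 2 := by
    rw [hε]; exact Real.sqrt_sq (by positivity)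
  calc Real.sqrt (GWval μ ρ) ≤ Real.sqrt (GWcost π) := Real.sqrt_le_sqrt hXZ
  _ = Real.sqrt (∫ w, (F w + G w) ^ 2 ∂M) := by rw [hcost0]
  _ ≤ Real.sqrt (∫ w, F w ^ 2 ∂M) + Real.sqrt (∫ w, G w ^ 2 ∂M) := hCS
  _ = Real.sqrt (GWcost π1) + Real.sqrt (GWcost π2) := by rw [hcost1, hcost2]
  _ ≤ Real.sqrt (GWval μ ν + ε) + Real.sqrt (GWval ν ρ + ε) :=
      add_le_add (Real.sqrt_le_sqrt hc1.le) (Real.sqrt_le_sqrt hc2.le)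
  _ ≤ (Real.sqrt (GWval μ ν) + Real.sqrt ε) + (Real.sqrt (GWval ν ρ) + Real.sqrt ε) :=
      add_le_add (sqrt_add_le_of_nonneg hv1 hεpos.le) (sqrt_add_le_of_nonneg hv2 hεpos.le)
  _ = Real.sqrt (GWval μ ν) + Real.sqrt (GWval ν ρ) + η := by rw [hsqε]; ring
end
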